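/- Let k be a field of characteristic zero, let n ≥ 1, and let A be an integral domain containing k that is a unique factorization domain, whose fraction field has transcendence degree n+1 over k, and with A* = k*. Let D_1, …, D_n be pairwise commuting locally nilpotent k-derivations of A, linearly independent over A, and let f ∈ A \ k with A^{D_1,…,D_n} = k[f]. Then for each i ∈ {1,…,n} there exists p_i ∈ A such that D_j(p_i) = 0 for all j ≠ i and D_i(p_i) is a nonzero element of k[f]; furthermore, every element of A is algebraic over the k-subalgebra generated by p_1, …, p_n, f. -/

import Mathlib

set_option linter.unusedSectionVars false

/-- A derivation is locally nilpotent if every element is killed by some iterate. -/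
def Derivation.IsLocallyNilpotent {k A : Type*} [CommRing k] [CommRing A] [Algebra k A]
    (D : Derivation k A A) : Prop :=
  ∀ a : A, ∃ m : ℕ, 1 ≤ m ∧ (fun x => D x)^[m] a = 0

section Machinery

variable {k : Type*} [Field k] [CharZero k] {A : Type*} [CommRing A] [IsDomain A] [Algebra k A]

/-- helper : sum over ι splits off j₀ -/
lemma sum_split {ι : Type*} [Fintype ι] [DecidableEq ι] {M : Type*} [AddCommMonoid M]
    (g : ι → M) (j₀ : ι) : ∑ i, g i = g j₀ + ∑ j : {j // j ≠ j₀}, g j.val := by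
  rw [Fintype.sum_eq_add_sum_compl j₀ g]
  congr 1
  exact (Finset.sum_subtype (p := fun j => j ≠ j₀) {j₀}ᶜ (fun x => by simp) g)

lemma iterate_comm (D₁ D₂ : Derivation k A A) (h : ∀ x, D₁ (D₂ x) = D₂ (D₁ x)) (m : ℕ)
    (x : A) : D₁ ((fun y => D₂ y)^[m] x) = (fun y => D₂ y)^[m] (D₁ x) := by
  induction m generalizing x with
  | zero => simp
  | succ m ih =>
    rw [Function.iterate_succ_apply, Function.iterate_succ_apply]
    rw [ih (D₂ x), ← h x]

/-- local slice existence -/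
lemma slice_exists (D : Derivation k A A) (hLN : D.IsLocallyNilpotent) (b : A)
    (hb : D b ≠ 0) : ∃ m : ℕ, D ((fun y => D y)^[m] b) ≠ 0 ∧
      D (D ((fun y => D y)^[m] b)) = 0 := by
  have hex : ∃ s : ℕ, (fun y => D y)^[s] b = 0 := by
    obtain ⟨m, _, hm⟩ := hLN b
    exact ⟨m, hm⟩
  classical
  have hsz : (fun y => D y)^[Nat.find hex] b = 0 := Nat.find_spec hex
  have hmin : ∀ t < Nat.find hex, (fun y => D y)^[t] b ≠ 0 := fun t ht => Nat.find_min hex ht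
  have hs1 : 2 ≤ Nat.find hex := by
    by_contra h
    interval_cases h : Nat.find hex
    · simp only [Function.iterate_zero, id] at hsz
      exact hb (by rw [hsz]; simp)
    · exact hb (by simpa using hsz)
  obtain ⟨t, ht⟩ : ∃ t, Nat.find hex = t + 2 := ⟨Nat.find hex - 2, by omega⟩
  refine ⟨t, ?_, ?_⟩
  · rw [← Function.iterate_succ_apply' (fun y => D y) t b]
    exact hmin (t+1) (by omega)
  · rw [← Function.iterate_succ_apply' (fun y => D y) t b,
        ← Function.iterate_succ_apply' (fun y => D y) (t+1) b]
    rw [ht] at hsz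
    exact hsz

end Machinery

section Rep

variable {k : Type*} [Field k] [CharZero k] {A : Type*} [CommRing A] [IsDomain A] [Algebra k A]

lemma repL (D : Derivation k A A) (r : A) (h2 : D (D r) = 0) :
    ∀ (s : ℕ) (a : A), (fun y => D y)^[s] a = 0 →
      ∃ (N M : ℕ) (b : ℕ → A), (∀ m, D (b m) = 0) ∧
        (D r)^N * a = ∑ m ∈ Finset.range (M+1), b m * r^m := by
  intro s
  induction s with
  | zero =>
    intro a ha
    simp only [Function.iterate_zero, id] at ha
    exact ⟨0, 0, fun _ => 0, fun m => by simp, by simp [ha]⟩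
  | succ s ih =>
    intro a ha
    have hDa : (fun y => D y)^[s] (D a) = 0 := by
      rw [← Function.iterate_succ_apply]; exact ha
    obtain ⟨N, M, b, hb, hrep⟩ := ih (D a) hDa
    set c := D r with hc
    set q : A := ∑ m ∈ Finset.range (M+1), ((m : k)+1)⁻¹ • (b m * r^(m+1)) with hq
    have hDterm : ∀ m : ℕ, D (((m : k)+1)⁻¹ • (b m * r^(m+1))) = b m * r ^ m * c := by
      intro m
      rw [D.map_smul, D.leibniz, hb m, smul_zero, add_zero, D.leibniz_pow]
      have hnat : (m+1 : ℕ) • (r ^ (m+1-1) • D r) = ((m : k)+1) • (r ^ m • D r) := by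
        rw [← Nat.cast_smul_eq_nsmul k]
        push_cast
        simp
      have hne : ((m : k)+1) ≠ 0 := by
        have h0 := (Nat.cast_ne_zero (R := k)).mpr (Nat.succ_ne_zero m)
        push_cast at h0
        exact h0
      rw [hnat, smul_comm (b m) ((m:k)+1), inv_smul_smul₀ hne, smul_eq_mul, smul_eq_mul,
        ← hc]
      ring
    have hDq : D q = c * (c^N * D a) := by
      rw [hq, map_sum, Finset.sum_congr rfl (fun m _ => hDterm m), ← Finset.sum_mul, ← hrep]
      ring
    have hDw : D (c^(N+1) * a - q) = 0 := by
      rw [map_sub, D.leibniz, D.leibniz_pow, h2, hDq]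
      simp only [smul_zero, add_zero, smul_eq_mul]
      ring
    refine ⟨N+1, M+1,
      fun m => Nat.casesOn m (c^(N+1) * a - q) (fun i => ((i : k)+1)⁻¹ • b i), ?_, ?_⟩
    · intro m
      cases m with
      | zero => exact hDw
      | succ i =>
        show D (((i : k)+1)⁻¹ • b i) = 0
        rw [D.map_smul, hb, smul_zero]
    · rw [Finset.sum_range_succ']
      have hterm : ∀ i : ℕ,
          (Nat.casesOn (i+1) (c^(N+1) * a - q) (fun i => ((i : k)+1)⁻¹ • b i) : A) * r^(i+1)
          = ((i : k)+1)⁻¹ • (b i * r^(i+1)) := by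
        intro i
        show (((i : k)+1)⁻¹ • b i) * r^(i+1) = _
        rw [smul_mul_assoc]
      rw [Finset.sum_congr rfl (fun i _ => hterm i), ← hq]
      show c ^ (N + 1) * a = q + (c^(N+1) * a - q) * r ^ 0
      ring

lemma van (D E : Derivation k A A) (hLN : D.IsLocallyNilpotent) (r : A) (hr : D r ≠ 0)
    (h2 : D (D r) = 0) (hkerE : ∀ x, D x = 0 → E x = 0) (hEr : E r = 0) :
    ∀ a : A, E a = 0 := by
  intro a
  obtain ⟨m, _, hm⟩ := hLN a
  obtain ⟨N, M, b, hb, hrep⟩ := repL D r h2 m a hm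
  have h1 : E ((D r)^N * a) = (D r)^N * E a := by
    rw [E.leibniz, E.leibniz_pow, hkerE (D r) h2, smul_zero, smul_zero, smul_zero,
      add_zero, smul_eq_mul]
  have h2' : E (∑ m ∈ Finset.range (M+1), b m * r^m) = 0 := by
    rw [map_sum]
    refine Finset.sum_eq_zero fun i _ => ?_
    rw [E.leibniz, E.leibniz_pow, hEr, hkerE (b i) (hb i)]
    simp
  rw [hrep, h2'] at h1
  rcases mul_eq_zero.mp h1.symm with h | h
  · exact absurd h (pow_ne_zero N hr)
  · exact h

end Rep

section Restrict

variable {k : Type*} [Field k] [CharZero k] {A : Type*} [CommRing A] [IsDomain A] [Algebra k A]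

/-- the kernel of a derivation, as a subalgebra -/
def kerSub (D₀ : Derivation k A A) : Subalgebra k A where
  carrier := {x | D₀ x = 0}
  mul_mem' := by
    intro x y hx hy
    simp only [Set.mem_setOf_eq] at *
    rw [D₀.leibniz, hx, hy, smul_zero, smul_zero, add_zero]
  add_mem' := by
    intro x y hx hy
    simp only [Set.mem_setOf_eq] at *
    rw [map_add, hx, hy, add_zero]
  algebraMap_mem' := fun c => D₀.map_algebraMap c

lemma mem_kerSub {D₀ : Derivation k A A} {x : A} : x ∈ kerSub D₀ ↔ D₀ x = 0 := Iff.rfl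

/-- restriction of a derivation commuting with D₀ to the kernel of D₀ -/
def restrictDer (D₀ D' : Derivation k A A) (hco : ∀ x, D₀ (D' x) = D' (D₀ x)) :
    Derivation k (kerSub D₀) (kerSub D₀) where
  toFun := fun x => ⟨D' x.val, by
    rw [mem_kerSub, hco, x.2, map_zero]⟩
  map_add' := fun x y => Subtype.ext (by simp)
  map_smul' := fun t x => Subtype.ext (by simp)
  map_one_eq_zero' := Subtype.ext (by simp)
  leibniz' := fun x y => Subtype.ext (by
    show D' (x.val * y.val) = x.val * D' y.val + y.val * D' x.val
    rw [D'.leibniz, smul_eq_mul, smul_eq_mul])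

@[simp] lemma restrictDer_apply (D₀ D' : Derivation k A A) (hco) (x : kerSub D₀) :
    (restrictDer D₀ D' hco x).val = D' x.val := rfl

lemma restrictDer_iterate (D₀ D' : Derivation k A A) (hco) (m : ℕ) (x : kerSub D₀) :
    ((fun y => restrictDer D₀ D' hco y)^[m] x).val = (fun y => D' y)^[m] x.val := by
  induction m generalizing x with
  | zero => rfl
  | succ m ih =>
    rw [Function.iterate_succ_apply, Function.iterate_succ_apply]
    rw [ih]
    rfl

lemma restrictDer_LN (D₀ D' : Derivation k A A) (hco) (h : D'.IsLocallyNilpotent) :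
    (restrictDer D₀ D' hco).IsLocallyNilpotent := by
  intro x
  obtain ⟨m, hm1, hm⟩ := h x.val
  exact ⟨m, hm1, Subtype.ext (by rw [restrictDer_iterate]; exact hm)⟩

end Restrict

section Indep

variable {k : Type*} [Field k] [CharZero k] {A : Type*} [CommRing A] [IsDomain A] [Algebra k A]

lemma der_sum_apply {ι : Type*} (s : Finset ι) (f : ι → Derivation k A A) (x : A) :
    (∑ j ∈ s, f j) x = ∑ j ∈ s, f j x := by
  classical
  induction s using Finset.induction_on with
  | empty => simp
  | insert _ _ hj ih => simp [Finset.sum_insert hj, Derivation.add_apply, ih]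

variable {ι : Type*} [Fintype ι] [DecidableEq ι]

lemma der_ne_zero (D : ι → Derivation k A A)
    (hindep : ∀ a : ι → A, (∀ x : A, ∑ i, a i * D i x = 0) → ∀ i, a i = 0) (j₀ : ι) :
    ∃ x, D j₀ x ≠ 0 := by
  classical
  by_contra h
  push_neg at h
  have := hindep (fun i => if i = j₀ then 1 else 0) (fun x => by
    rw [Finset.sum_eq_single j₀]
    · simp [h x]
    · intro b _ hb; simp [hb]
    · intro hb; exact absurd (Finset.mem_univ j₀) hb) j₀
  simp at this

lemma indep_restrict (D : ι → Derivation k A A)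
    (hLN : ∀ i, (D i).IsLocallyNilpotent)
    (hcomm : ∀ i j, ∀ x : A, D i (D j x) = D j (D i x))
    (hindep : ∀ a : ι → A, (∀ x : A, ∑ i, a i * D i x = 0) → ∀ i, a i = 0) (j₀ : ι) :
    ∀ a : {j // j ≠ j₀} → kerSub (D j₀),
      (∀ x : kerSub (D j₀),
        ∑ j, a j * restrictDer (D j₀) (D j.val) (hcomm j₀ j.val) x = 0) →
      ∀ j, a j = 0 := by
  classical
  intro a hx
  -- find a local slice for D j₀
  obtain ⟨x₀, hx₀⟩ := der_ne_zero D hindep j₀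
  obtain ⟨m, hr1, hr2⟩ := slice_exists (D j₀) (hLN j₀) x₀ hx₀
  set r := (fun y => D j₀ y)^[m] x₀ with hrdef
  set c := D j₀ r with hcdef
  set e := ∑ j : {j // j ≠ j₀}, (a j).val * D j.val r with hedef
  set S : Derivation k A A := ∑ j : {j // j ≠ j₀}, (a j).val • D j.val with hSdef
  set Eder : Derivation k A A := c • S - e • D j₀ with hEdef
  have hSapp : ∀ y, S y = ∑ j : {j // j ≠ j₀}, (a j).val * D j.val y := by
    intro y
    rw [hSdef, der_sum_apply]
    exact Finset.sum_congr rfl fun j _ => by rw [Derivation.smul_apply, smul_eq_mul]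
  have hEapp : ∀ y, Eder y = c * S y - e * D j₀ y := by
    intro y
    rw [hEdef, Derivation.sub_apply, Derivation.smul_apply, Derivation.smul_apply,
      smul_eq_mul, smul_eq_mul]
  -- Eder vanishes on ker D j₀
  have hker : ∀ y, D j₀ y = 0 → Eder y = 0 := by
    intro y hy
    have h0 := congrArg Subtype.val (hx ⟨y, hy⟩)
    have h0' : ∑ j : {j // j ≠ j₀}, (a j).val * D j.val y = 0 := by
      push_cast at h0
      simpa using h0
    rw [hEapp, hSapp, h0', hy, mul_zero, mul_zero, sub_zero]
  have hEr : Eder r = 0 := by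
    rw [hEapp, hSapp, ← hedef, ← hcdef]
    ring
  have hE0 : ∀ y, Eder y = 0 := van (D j₀) Eder (hLN j₀) r hr1 hr2 hker hEr
  -- now build the full coefficient family
  set at' : ι → A := fun i => if h : i = j₀ then -e else c * (a ⟨i, h⟩).val with hat
  have hsum : ∀ y : A, ∑ i, at' i * D i y = 0 := by
    intro y
    rw [sum_split (fun i => at' i * D i y) j₀]
    have h1 : at' j₀ = -e := by rw [hat]; simp
    have h2 : ∀ j : {j // j ≠ j₀}, at' j.val = c * (a j).val := by
      intro j
      rw [hat]
      simp [j.2]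
    rw [h1, Finset.sum_congr rfl (fun j _ => by rw [h2 j])]
    have := hE0 y
    rw [hEapp, hSapp] at this
    rw [Finset.mul_sum] at this
    have expand : ∑ j : {j // j ≠ j₀}, c * (a j).val * D j.val y
        = ∑ j : {j // j ≠ j₀}, c * ((a j).val * D j.val y) :=
      Finset.sum_congr rfl fun j _ => by ring
    rw [expand]
    linear_combination this
  intro j
  have hz := hindep at' hsum j.val
  have : c * (a j).val = 0 := by
    rw [hat] at hz
    simpa [j.2] using hz
  have hc0 : c ≠ 0 := hr1
  have := (mul_eq_zero.mp this).resolve_left hc0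
  exact Subtype.ext this

end Indep

section EX

universe u w

variable {k : Type*} [Field k] [CharZero k]

lemma EX (k : Type*) [Field k] [CharZero k] (N : ℕ) :
    ∀ {ι : Type w} [Fintype ι] [DecidableEq ι] {A : Type u} [CommRing A] [IsDomain A]
      [Algebra k A] (D : ι → Derivation k A A),
      Fintype.card ι = N →
      (∀ i, (D i).IsLocallyNilpotent) →
      (∀ i j, ∀ x : A, D i (D j x) = D j (D i x)) →
      (∀ a : ι → A, (∀ x : A, ∑ i, a i * D i x = 0) → ∀ i, a i = 0) →
      ∀ i : ι, ∃ b : A, (∀ j, j ≠ i → D j b = 0) ∧ D i b ≠ 0 := by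
  induction N with
  | zero =>
    intro ι _ _ A _ _ _ D hcard _ _ _ i
    exact ((Fintype.card_eq_zero_iff.mp hcard).elim i)
  | succ N IH =>
    intro ι _ _ A _ _ _ D hcard hLN hcomm hindep i
    by_cases hex : ∃ j₀ : ι, j₀ ≠ i
    · obtain ⟨j₀, hj₀⟩ := hex
      have hcard' : Fintype.card {j : ι // j ≠ j₀} = N := by
        have h1 := Fintype.card_subtype_compl (fun j : ι => j = j₀)
        have h2 : Fintype.card {j : ι // j = j₀} = 1 := Fintype.card_subtype_eq j₀
        simp only [h2, hcard] at h1
        convert h1 using 2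
        omega
      set E : {j : ι // j ≠ j₀} → Derivation k (kerSub (D j₀)) (kerSub (D j₀)) :=
        fun j => restrictDer (D j₀) (D j.val) (hcomm j₀ j.val) with hE
      have hLN' : ∀ j, (E j).IsLocallyNilpotent :=
        fun j => restrictDer_LN _ _ _ (hLN j.val)
      have hcomm' : ∀ p q, ∀ x : kerSub (D j₀), E p (E q x) = E q (E p x) :=
        fun p q x => Subtype.ext (hcomm p.val q.val x.val)
      have hindep' := indep_restrict D hLN hcomm hindep j₀
      obtain ⟨b, hb1, hb2⟩ := IH E hcard' hLN' hcomm' hindep' ⟨i, Ne.symm hj₀⟩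
      refine ⟨b.val, ?_, ?_⟩
      · intro j hji
        by_cases hjj : j = j₀
        · subst hjj
          exact b.2
        · have hq : (⟨j, hjj⟩ : {j : ι // j ≠ j₀}) ≠ ⟨i, Ne.symm hj₀⟩ := by
            simp [Subtype.ext_iff, hji]
          have := congrArg Subtype.val (hb1 ⟨j, hjj⟩ hq)
          simpa [hE] using this
      · intro h
        exact hb2 (Subtype.ext (by simpa [hE] using h))
    · push_neg at hex
      obtain ⟨b, hb⟩ := der_ne_zero D hindep i
      exact ⟨b, fun j hj => absurd (hex j) hj, hb⟩

end EX

section MAIN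

universe u' w'

lemma MAIN (k : Type*) [Field k] [CharZero k] (N : ℕ) :
    ∀ {ι : Type w'} [Fintype ι] [DecidableEq ι] {A : Type u'} [CommRing A] [IsDomain A]
      [Algebra k A] (D : ι → Derivation k A A),
      Fintype.card ι = N →
      (∀ i, (D i).IsLocallyNilpotent) →
      (∀ i j, ∀ x : A, D i (D j x) = D j (D i x)) →
      (∀ a : ι → A, (∀ x : A, ∑ i, a i * D i x = 0) → ∀ i, a i = 0) →
      ∃ p : ι → A,
        (∀ i j, j ≠ i → D j (p i) = 0) ∧
        (∀ i, D i (p i) ≠ 0 ∧ ∀ j, D j (D i (p i)) = 0) ∧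
        (∀ a : A, ∃ d : A,
          d ∈ Algebra.adjoin k (Set.range p ∪ {x : A | ∀ i, D i x = 0}) ∧ d ≠ 0 ∧
          d * a ∈ Algebra.adjoin k (Set.range p ∪ {x : A | ∀ i, D i x = 0})) := by
  induction N with
  | zero =>
    intro ι _ _ A _ _ _ D hcard _ _ _
    have : IsEmpty ι := Fintype.card_eq_zero_iff.mp hcard
    refine ⟨fun i => isEmptyElim i, fun i => isEmptyElim i, fun i => isEmptyElim i, ?_⟩
    intro a
    refine ⟨1, Subalgebra.one_mem _, one_ne_zero, ?_⟩
    rw [one_mul]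
    exact Algebra.subset_adjoin (Or.inr (fun i => isEmptyElim i))
  | succ N IH =>
    intro ι _ _ A _ _ _ D hcard hLN hcomm hindep
    have hpos : 0 < Fintype.card ι := by omega
    obtain ⟨j₀⟩ := Fintype.card_pos_iff.mp hpos
    -- slice at j₀ inside the common kernel of the other derivations
    obtain ⟨b, hb1, hb2⟩ := EX k (N+1) D hcard hLN hcomm hindep j₀
    obtain ⟨m, hm1, hm2⟩ := slice_exists (D j₀) (hLN j₀) b hb2
    set r := (fun y => D j₀ y)^[m] b with hrdef
    have hrK : ∀ j, j ≠ j₀ → D j r = 0 := by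
      intro j hj
      rw [hrdef, iterate_comm (D j) (D j₀) (fun x => hcomm j j₀ x) m b, hb1 j hj]
      exact Function.iterate_fixed (map_zero _) m
    set c := D j₀ r with hcdef
    have hc1 : c ≠ 0 := hm1
    have hcK : ∀ j, D j c = 0 := by
      intro j
      by_cases hj : j = j₀
      · rw [hj]; exact hm2
      · rw [hcdef, hcomm j j₀ r, hrK j hj, map_zero]
    -- restricted derivations on the kernel of D j₀
    have hcard' : Fintype.card {j : ι // j ≠ j₀} = N := by
      have h1 := Fintype.card_subtype_compl (fun j : ι => j = j₀)
      have h2 : Fintype.card {j : ι // j = j₀} = 1 := Fintype.card_subtype_eq j₀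
      simp only [h2, hcard] at h1
      convert h1 using 2
      omega
    set E : {j : ι // j ≠ j₀} → Derivation k (kerSub (D j₀)) (kerSub (D j₀)) :=
      fun j => restrictDer (D j₀) (D j.val) (hcomm j₀ j.val) with hE
    have hLN' : ∀ j, (E j).IsLocallyNilpotent :=
      fun j => restrictDer_LN _ _ _ (hLN j.val)
    have hcomm' : ∀ p q, ∀ x : kerSub (D j₀), E p (E q x) = E q (E p x) :=
      fun p q x => Subtype.ext (hcomm p.val q.val x.val)
    have hindep' := indep_restrict D hLN hcomm hindep j₀
    obtain ⟨q, hq1, hq2, hq3⟩ := IH E hcard' hLN' hcomm' hindep'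
    -- assemble p
    set p : ι → A := fun i => if h : i = j₀ then r else (q ⟨i, h⟩).val with hp
    have hpj₀ : p j₀ = r := by rw [hp]; simp
    have hpne : ∀ i (h : i ≠ j₀), p i = (q ⟨i, h⟩).val := by
      intro i h
      rw [hp]
      simp [h]
    refine ⟨p, ?_, ?_, ?_⟩
    · -- vanishing of the other derivations on p i
      intro i j hji
      by_cases hi : i = j₀
      · subst hi
        rw [hpj₀]
        exact hrK j hji
      · rw [hpne i hi]
        by_cases hj : j = j₀
        · subst hj
          exact (q ⟨i, hi⟩).2
        · have hne : (⟨j, hj⟩ : {j : ι // j ≠ j₀}) ≠ ⟨i, hi⟩ := by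
            simp [Subtype.ext_iff, hji]
          have := congrArg Subtype.val (hq1 ⟨i, hi⟩ ⟨j, hj⟩ hne)
          simpa [hE] using this
    · -- nonvanishing and kernel conditions
      intro i
      by_cases hi : i = j₀
      · subst hi
        rw [hpj₀, ← hcdef]
        exact ⟨hc1, hcK⟩
      · rw [hpne i hi]
        constructor
        · intro h
          exact (hq2 ⟨i, hi⟩).1 (Subtype.ext (by simpa [hE] using h))
        · intro j
          by_cases hj : j = j₀
          · subst hj
            have : D i (q ⟨i, hi⟩).val = (E ⟨i, hi⟩ (q ⟨i, hi⟩)).val := by simp [hE]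
            rw [this]
            exact (E ⟨i, hi⟩ (q ⟨i, hi⟩)).2
          · have := congrArg Subtype.val ((hq2 ⟨i, hi⟩).2 ⟨j, hj⟩)
            simpa [hE] using this
    · -- algebraicity with denominators
      intro a
      set Θ : Set A := {x : A | ∀ i, D i x = 0} with hΘ
      set S : Subalgebra k A := Algebra.adjoin k (Set.range p ∪ Θ) with hS
      set Θ' : Set (kerSub (D j₀)) := {x | ∀ i, E i x = 0} with hΘ'
      set S' : Subalgebra k (kerSub (D j₀)) := Algebra.adjoin k (Set.range q ∪ Θ') with hS'
      have hmap : ∀ z : kerSub (D j₀), z ∈ S' → z.val ∈ S := by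
        intro z hz
        have h1 : Subalgebra.map (kerSub (D j₀)).val S' ≤ S := by
          rw [hS', AlgHom.map_adjoin]
          apply Algebra.adjoin_mono
          rintro x ⟨y, hy, rfl⟩
          rcases hy with ⟨j, rfl⟩ | hy
          · exact Or.inl ⟨j.val, hpne j.val j.2⟩
          · refine Or.inr ?_
            intro i
            by_cases hij : i = j₀
            · subst hij; exact y.2
            · have := congrArg Subtype.val (hy ⟨i, hij⟩)
              simpa [hE] using this
        exact h1 ⟨z, hz, rfl⟩
      have hrS : r ∈ S := Algebra.subset_adjoin (Or.inl ⟨j₀, hpj₀⟩)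
      have hcS : c ∈ S := Algebra.subset_adjoin (Or.inr hcK)
      obtain ⟨s, _, hs⟩ := hLN j₀ a
      obtain ⟨N₀, M, bb, hbb, hrep⟩ := repL (D j₀) r hm2 s a hs
      -- coefficients of the representation lie in the kernel; apply IH to them
      choose d' hd'S hd'ne hd'mul using fun m : ℕ => hq3 ⟨bb m, hbb m⟩
      refine ⟨c^N₀ * ∏ m' ∈ Finset.range (M+1), (d' m').val, ?_, ?_, ?_⟩
      · exact mul_mem (pow_mem hcS N₀)
          (prod_mem fun m' _ => hmap (d' m') (hd'S m'))
      · refine mul_ne_zero (pow_ne_zero _ hc1) (Finset.prod_ne_zero_iff.mpr ?_)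
        intro m' _
        exact fun h => hd'ne m' (Subtype.ext h)
      · have key : (c^N₀ * ∏ m' ∈ Finset.range (M+1), (d' m').val) * a
            = ∑ m' ∈ Finset.range (M+1),
                (∏ m'' ∈ (Finset.range (M+1)).erase m', (d' m'').val)
                  * (((d' m').val * bb m') * r^m') := by
          calc (c^N₀ * ∏ m' ∈ Finset.range (M+1), (d' m').val) * a
              = (∏ m' ∈ Finset.range (M+1), (d' m').val) * (c^N₀ * a) := by ring
            _ = (∏ m' ∈ Finset.range (M+1), (d' m').val)
                  * ∑ m' ∈ Finset.range (M+1), bb m' * r^m' := by rw [hrep]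
            _ = ∑ m' ∈ Finset.range (M+1),
                  (∏ m'' ∈ Finset.range (M+1), (d' m'').val) * (bb m' * r^m') := by
                rw [Finset.mul_sum]
            _ = _ := by
                refine Finset.sum_congr rfl fun m' hm' => ?_
                rw [← Finset.mul_prod_erase _ _ hm']
                ring
        rw [key]
        refine sum_mem fun m' hm' => ?_
        refine mul_mem (prod_mem fun m'' _ => hmap (d' m'') (hd'S m''))
          (mul_mem ?_ (pow_mem hrS m'))
        have := hmap (d' m' * ⟨bb m', hbb m'⟩) (hd'mul m')
        simpa using this

end MAIN

theorem statement4 (k : Type*) [Field k] [CharZero k] (n : ℕ) (hn : 1 ≤ n)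
    (A : Type*) [CommRing A] [IsDomain A] [UniqueFactorizationMonoid A] [Algebra k A]
    (htrdeg : ∃ b : Fin (n + 1) → FractionRing A, IsTranscendenceBasis k b)
    (hunits : ∀ a : A, IsUnit a → ∃ c : k, algebraMap k A c = a)
    (D : Fin n → Derivation k A A)
    (hLN : ∀ i, (D i).IsLocallyNilpotent)
    (hcomm : ∀ i j, ∀ x : A, D i (D j x) = D j (D i x))
    (hindep : ∀ a : Fin n → A,
      (∀ x : A, ∑ i, a i * D i x = 0) → ∀ i, a i = 0)
    (f : A) (hf : f ∉ (algebraMap k A).range)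
    (hker : {a : A | ∀ i, D i a = 0} = (Algebra.adjoin k {f} : Subalgebra k A)) :
    ∃ p : Fin n → A,
      (∀ i j, j ≠ i → D j (p i) = 0) ∧
      (∀ i, D i (p i) ∈ Algebra.adjoin k {f} ∧ D i (p i) ≠ 0) ∧
      (∀ a : A, IsAlgebraic (Algebra.adjoin k (Set.range p ∪ {f})) a) := by
  obtain ⟨p, hp1, hp2, hp3⟩ :=
    MAIN k n D (Fintype.card_fin n) hLN hcomm hindep
  refine ⟨p, hp1, ?_, ?_⟩
  · intro i
    constructor
    · have hmem : D i (p i) ∈ {a : A | ∀ j, D j a = 0} := (hp2 i).2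
      rw [hker] at hmem
      exact hmem
    · exact (hp2 i).1
  · intro a
    obtain ⟨d, hdS, hdne, hdaS⟩ := hp3 a
    have hle : Algebra.adjoin k (Set.range p ∪ {x : A | ∀ i, D i x = 0})
        ≤ Algebra.adjoin k (Set.range p ∪ {f}) := by
      apply Algebra.adjoin_le
      rintro x (hx | hx)
      · exact Algebra.subset_adjoin (Or.inl hx)
      · rw [hker] at hx
        exact Algebra.adjoin_mono Set.subset_union_right hx
    refine ⟨Polynomial.C (⟨d, hle hdS⟩ : Algebra.adjoin k (Set.range p ∪ {f}))
        * Polynomial.X - Polynomial.C ⟨d * a, hle hdaS⟩, ?_, ?_⟩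
    · intro h
      have h1 := congrArg (fun P => Polynomial.coeff P 1) h
      simp only [Polynomial.coeff_sub, Polynomial.coeff_C_mul, Polynomial.coeff_X_one,
        Polynomial.coeff_C, mul_one, Polynomial.coeff_zero] at h1
      norm_num at h1
      exact hdne (by simpa using congrArg Subtype.val h1)
    · simp only [map_sub, map_mul, Polynomial.aeval_C, Polynomial.aeval_X]
      have h1 : (algebraMap (Algebra.adjoin k (Set.range p ∪ {f})) A)
          ⟨d, hle hdS⟩ = d := rfl
      have h2 : (algebraMap (Algebra.adjoin k (Set.range p ∪ {f})) A)
          ⟨d * a, hle hdaS⟩ = d * a := rfl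
      rw [h1, h2, sub_self]
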